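/- Let θ ∈ (0,1) be irrational with continued fraction expansion θ = [0; a_1, a_2, a_3, …] and convergents p_k/q_k. Suppose (ℓ_n)_{n≥1} is a strictly increasing sequence of natural numbers and ε > 0 is such that a_{ℓ_n + 1} ≥ ε·(a_{m+1} + 2) for every n and every m ≤ ℓ_n, and set r_n := q_{ℓ_n}. Then for every n, every real c > 0, and every integer q with 1 ≤ q < r_n: if ‖q·θ‖ < c·‖r_n·θ‖ then q ≥ (ε/c)·r_n. -/

import Mathlib

set_option maxHeartbeats 1000000


/-- Let `θ ∈ (0,1)` be irrational with continued fraction expansion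
`θ = [0; a_1, a_2, …]` (encoded via the Gauss map `x_{k+1} = fract (1/x_k)`,
`a_{k+1} = ⌊1/x_k⌋`) and convergents `p_k/q_k` (given by the standard recurrences).
Suppose `(ℓ_n)` is strictly increasing, `ε > 0` and `a_{ℓ_n+1} ≥ ε·(a_{m+1}+2)`
for all `n` and all `m ≤ ℓ_n`, and set `r_n := q_{ℓ_n}`.  Then for every `n`, every
`c > 0` and every integer `q` with `1 ≤ q < r_n`, if `‖qθ‖ < c·‖r_nθ‖` then
`q ≥ (ε/c)·r_n`.  Here `‖x‖ = |x - round x|` is the distance to the nearest integer. -/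
theorem stmt_3 (θ : ℝ) (hθ : θ ∈ Set.Ioo (0 : ℝ) 1) (hirr : Irrational θ)
    (a : ℕ → ℕ) (x : ℕ → ℝ) (p q : ℕ → ℤ)
    (hx0 : x 0 = θ)
    (hgauss : ∀ k, ((a (k + 1) : ℤ) = ⌊1 / x k⌋ ∧ x (k + 1) = Int.fract (1 / x k)))
    (hp0 : p 0 = 0) (hp1 : p 1 = 1) (hq0 : q 0 = 1) (hq1 : q 1 = (a 1 : ℤ))
    (hp : ∀ k, p (k + 2) = (a (k + 2) : ℤ) * p (k + 1) + p k)
    (hq : ∀ k, q (k + 2) = (a (k + 2) : ℤ) * q (k + 1) + q k)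
    (l : ℕ → ℕ) (hl : StrictMono l)
    (ε : ℝ) (hε : 0 < ε)
    (hdom : ∀ n, ∀ m ≤ l n, (a (l n + 1) : ℝ) ≥ ε * ((a (m + 1) : ℝ) + 2))
    (r : ℕ → ℤ) (hr : ∀ n, r n = q (l n)) :
    ∀ n : ℕ, ∀ c : ℝ, 0 < c → ∀ k : ℤ, 1 ≤ k → k < r n →
      |(k : ℝ) * θ - round ((k : ℝ) * θ)| < c * |(r n : ℝ) * θ - round ((r n : ℝ) * θ)| →
      (k : ℝ) ≥ (ε / c) * (r n : ℝ) := by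
  obtain ⟨hθ0, hθ1⟩ := hθ
  -- irrationality of the Gauss iterates
  have hxIrr : ∀ k, Irrational (x k) := by
    intro k
    induction k with
    | zero => rwa [hx0]
    | succ k ih =>
      rw [(hgauss k).2, Int.fract]
      exact Irrational.sub_intCast (by rw [one_div]; exact ih.inv) _
  have hx01 : ∀ k, 0 < x k ∧ x k < 1 := by
    intro k
    cases k with
    | zero => rw [hx0]; exact ⟨hθ0, hθ1⟩
    | succ k =>
      constructor
      · rcases lt_or_eq_of_le (by rw [(hgauss k).2]; exact Int.fract_nonneg _ :
          (0:ℝ) ≤ x (k+1)) with h | h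
        · exact h
        · exact absurd h.symm (hxIrr (k+1)).ne_zero
      · rw [(hgauss k).2]; exact Int.fract_lt_one _
  have hxne : ∀ k, x k ≠ 0 := fun k => (hx01 k).1.ne'
  have ha : ∀ k, (1 : ℤ) ≤ (a (k+1) : ℤ) := by
    intro k
    rw [(hgauss k).1]
    refine Int.le_floor.2 ?_
    push_cast
    rw [le_div_iff₀ (hx01 k).1, one_mul]
    exact (hx01 k).2.le
  have hxrec : ∀ k, x (k+1) = 1 / x k - (a (k+1) : ℝ) := by
    intro k
    rw [(hgauss k).2, Int.fract, ← (hgauss k).1]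
    push_cast; ring
  -- the error sequence
  set η : ℕ → ℝ := fun k => (q k : ℝ) * θ - (p k : ℝ) with hηdef
  have hη0 : η 0 = θ := by simp [hηdef, hq0, hp0]
  have hηrec : ∀ k, η (k+2) = (a (k+2) : ℝ) * η (k+1) + η k := by
    intro k
    simp only [hηdef, hp k, hq k]
    push_cast; ring
  have hηstep : ∀ k, η (k+1) = -(x (k+1)) * η k := by
    intro k
    induction k with
    | zero =>
      have h1 : η 1 = (a 1 : ℝ) * θ - 1 := by simp [hηdef, hq1, hp1]
      rw [h1, hη0, hxrec 0, hx0]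
      field_simp
      ring
    | succ k ih =>
      have hx := hxrec (k+1)
      have hne := hxne (k+1)
      have hηk : η k = -(η (k+1)) / x (k+1) := by
        rw [ih]; field_simp
      rw [hηrec k, hηk, hx]
      field_simp
      ring
  set E : ℕ → ℝ := fun k => (-1 : ℝ)^k * η k with hEdef
  have hEstep : ∀ k, E (k+1) = x (k+1) * E k := by
    intro k; simp only [hEdef, hηstep k, pow_succ]; ring
  have hEpos : ∀ k, 0 < E k := by
    intro k
    induction k with
    | zero => simpa [hEdef, hη0] using hθ0
    | succ k ih => rw [hEstep k]; exact mul_pos (hx01 (k+1)).1 ih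
  have hEdec : ∀ k, E (k+1) < E k := by
    intro k
    rw [hEstep k]
    nlinarith [(hx01 (k+1)).2, hEpos k]
  have hErec : ∀ k, E (k+2) = E k - (a (k+2) : ℝ) * E (k+1) := by
    intro k
    simp only [hEdef, hηrec k, pow_succ]
    ring
  have hηE : ∀ k, η k = (-1 : ℝ)^k * E k := by
    intro k
    simp only [hEdef, ← mul_assoc, ← mul_pow]
    norm_num
  have hηabs : ∀ k, |η k| = E k := by
    intro k
    rw [hηE k, abs_mul, abs_pow, abs_neg, abs_one, one_pow, one_mul,
      abs_of_pos (hEpos k)]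
  -- positivity / monotonicity of q
  have hqmono : ∀ k, 1 ≤ q k ∧ q k ≤ q (k+1) := by
    intro k
    induction k with
    | zero => exact ⟨by rw [hq0], by rw [hq0, hq1]; exact ha 0⟩
    | succ k ih =>
      obtain ⟨h1, h2⟩ := ih
      refine ⟨le_trans h1 h2, ?_⟩
      rw [hq k]
      nlinarith [ha (k+1), le_trans h1 h2]
  -- the fundamental identity
  have hId : ∀ k, (q (k+1) : ℝ) * E k + (q k : ℝ) * E (k+1) = 1 := by
    intro k
    induction k with
    | zero =>
      have hE0 : E 0 = θ := by simp [hEdef, hη0]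
      have hE1 : E 1 = x 1 * E 0 := hEstep 0
      rw [hq0, hq1, hE1, hE0, hxrec 0, hx0]
      push_cast
      field_simp
      ring
    | succ k ih =>
      have hqc : (q (k+2) : ℝ) = (a (k+2) : ℝ) * (q (k+1) : ℝ) + (q k : ℝ) := by
        exact_mod_cast congrArg (Int.cast : ℤ → ℝ) (hq k)
      rw [hErec k, hqc]
      linear_combination ih
  -- determinant identity
  have hdet : ∀ k, q (k+1) * p k - q k * p (k+1) = (-1 : ℤ)^(k+1) := by
    intro k
    induction k with
    | zero => rw [hq0, hq1, hp0, hp1]; ring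
    | succ k ih =>
      rw [hq k, hp k, pow_succ]
      linear_combination (-1 : ℤ) * ih
  -- best approximation property
  have hba : ∀ m, ∀ j pz : ℤ, 1 ≤ j → j < q (m+1) → E m ≤ |(j : ℝ) * θ - (pz : ℝ)| := by
    intro m j pz hj1 hj2
    set s : ℤ := (-1)^m with hsdef
    have hs : s * s = 1 := by rw [hsdef, ← pow_add]; exact Even.neg_one_pow ⟨m, rfl⟩
    have hΔ : q m * p (m+1) - q (m+1) * p m = s := by
      have := hdet m
      rw [pow_succ] at this
      linarith [this]
    set α : ℤ := s * (j * p (m+1) - pz * q (m+1)) with hα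
    set β : ℤ := s * (pz * q m - j * p m) with hβ
    have hjeq : α * q m + β * q (m+1) = j := by
      rw [hα, hβ]; linear_combination (s * j) * hΔ + j * hs
    have hpeq : α * p m + β * p (m+1) = pz := by
      rw [hα, hβ]; linear_combination (s * pz) * hΔ + pz * hs
    have hkey : (j : ℝ) * θ - (pz : ℝ) = (α : ℝ) * η m + (β : ℝ) * η (m+1) := by
      have hjR : (j : ℝ) = (α : ℝ) * (q m : ℝ) + (β : ℝ) * (q (m+1) : ℝ) := by
        exact_mod_cast hjeq.symm
      have hpR : (pz : ℝ) = (α : ℝ) * (p m : ℝ) + (β : ℝ) * (p (m+1) : ℝ) := by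
        exact_mod_cast hpeq.symm
      rw [hjR, hpR]
      simp only [hηdef]
      ring
    have habs : |(j : ℝ) * θ - (pz : ℝ)| = |(α : ℝ) * E m - (β : ℝ) * E (m+1)| := by
      rw [hkey, hηE m, hηE (m+1), pow_succ]
      have : (α : ℝ) * ((-1:ℝ)^m * E m) + (β : ℝ) * ((-1:ℝ)^m * (-1) * E (m+1))
          = (-1:ℝ)^m * ((α : ℝ) * E m - (β : ℝ) * E (m+1)) := by ring
      rw [this, abs_mul, abs_pow, abs_neg, abs_one, one_pow, one_mul]
    rw [habs]
    have hqm1 : (1 : ℤ) ≤ q m := (hqmono m).1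
    have hqm2 : q m ≤ q (m+1) := (hqmono m).2
    rcases lt_trichotomy β 0 with hb | hb | hb
    · -- β ≤ -1, so α ≥ 1
      have hb1 : β ≤ -1 := by omega
      have ha1 : 1 ≤ α := by nlinarith [hjeq]
      have hαR : (1 : ℝ) ≤ (α : ℝ) := by exact_mod_cast ha1
      have hβR : (β : ℝ) ≤ -1 := by exact_mod_cast hb1
      refine le_trans ?_ (le_abs_self _)
      nlinarith [hEpos m, hEpos (m+1)]
    · -- β = 0, α ≥ 1
      have ha1 : 1 ≤ α := by nlinarith [hjeq]
      have hαR : (1 : ℝ) ≤ (α : ℝ) := by exact_mod_cast ha1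
      rw [hb]
      push_cast
      rw [mul_comm, zero_mul, sub_zero, abs_mul, abs_of_pos (hEpos m)]
      nlinarith [hEpos m, abs_nonneg (α : ℝ), le_abs_self (α : ℝ)]
    · -- β ≥ 1, so α ≤ -1
      have hb1 : 1 ≤ β := hb
      have ha1 : α ≤ -1 := by nlinarith [hjeq]
      have hαR : (α : ℝ) ≤ -1 := by exact_mod_cast ha1
      have hβR : (1 : ℝ) ≤ (β : ℝ) := by exact_mod_cast hb1
      refine le_trans ?_ (neg_le_abs _)
      nlinarith [hEpos m, hEpos (m+1)]
  -- locating k between consecutive convergent denominators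
  have hfind : ∀ L : ℕ, ∀ k : ℤ, 1 ≤ k → k < q L →
      ∃ m, m + 1 ≤ L ∧ q m ≤ k ∧ k < q (m+1) := by
    intro L
    induction L with
    | zero => intro k hk1 hk2; rw [hq0] at hk2; omega
    | succ L ih =>
      intro k hk1 hk2
      by_cases h : q L ≤ k
      · exact ⟨L, le_refl _, h, hk2⟩
      · push_neg at h
        obtain ⟨m, hm1, hm2, hm3⟩ := ih k hk1 h
        exact ⟨m, by omega, hm2, hm3⟩
  -- main argument
  intro n c hc k hk1 hk2 hlt
  rw [hr n] at hk2 hlt ⊢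
  set L := l n with hLdef
  obtain ⟨m, hmL, hqmk, hkqm1⟩ := hfind L k hk1 hk2
  have hm_le : m ≤ l n := by omega
  -- upper bound on the distance at r n
  have hELub : (q (L+1) : ℝ) * E L < 1 := by
    have h1 := hId L
    have h2 : (1 : ℝ) ≤ (q L : ℝ) := by exact_mod_cast (hqmono L).1
    nlinarith [hEpos (L+1)]
  have hrnd : |(q L : ℝ) * θ - round ((q L : ℝ) * θ)| ≤ E L := by
    calc |(q L : ℝ) * θ - round ((q L : ℝ) * θ)| ≤ |(q L : ℝ) * θ - (p L : ℝ)| :=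
          round_le _ _
      _ = E L := hηabs L
  -- lower bound on the distance at k
  have hEm_le : E m ≤ |(k : ℝ) * θ - (round ((k : ℝ) * θ) : ℝ)| :=
    hba m k (round ((k : ℝ) * θ)) hk1 hkqm1
  have hm1Z : q (m+1) + q m ≤ ((a (m+1) : ℤ) + 2) * q m := by
    cases m with
    | zero => rw [hq0, hq1]; linarith [ha 0]
    | succ t =>
      have h1 := (hqmono t).2
      rw [hq t]
      linarith
  have hm1 : (q (m+1) : ℝ) + (q m : ℝ) ≤ ((a (m+1) : ℝ) + 2) * (q m : ℝ) := by
    exact_mod_cast hm1Z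
  have hqmposR : (0:ℝ) < (q m : ℝ) := by
    have h := (hqmono m).1
    exact_mod_cast lt_of_lt_of_le zero_lt_one h
  have hEm_lb : 1 < ((a (m+1) : ℝ) + 2) * ((q m : ℝ) * E m) := by
    have h1 := hId m
    have h2 : (q m:ℝ) * E (m+1) < (q m:ℝ) * E m :=
      mul_lt_mul_of_pos_left (hEdec m) hqmposR
    have h3 := mul_le_mul_of_nonneg_right hm1 (hEpos m).le
    nlinarith
  have hqL1Z : (a (L+1) : ℤ) * q L ≤ q (L+1) := by
    obtain ⟨t, ht⟩ : ∃ t, L = t + 1 := ⟨L - 1, by omega⟩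
    rw [ht, hq t]
    linarith [(hqmono t).1]
  have hqL1R : (a (L+1) : ℝ) * (q L : ℝ) ≤ (q (L+1) : ℝ) := by exact_mod_cast hqL1Z
  have hA : (a (L + 1) : ℝ) ≥ ε * ((a (m + 1) : ℝ) + 2) := by
    rw [hLdef]; exact hdom n m hm_le
  have hApos : (0:ℝ) < (a (L+1) : ℝ) := by
    have h := ha L
    have h' : (1:ℝ) ≤ (a (L+1) : ℝ) := by exact_mod_cast h
    linarith
  have hkR : (1:ℝ) ≤ (k:ℝ) := by exact_mod_cast hk1
  have hkpos : (0:ℝ) < (k:ℝ) := lt_of_lt_of_le zero_lt_one hkR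
  have hqmR : (q m : ℝ) ≤ (k:ℝ) := by exact_mod_cast hqmk
  have hqLpos : (0:ℝ) < (q L : ℝ) := by
    have h := (hqmono L).1
    exact_mod_cast lt_of_lt_of_le zero_lt_one h
  have hEmkpos : (0:ℝ) < (q m:ℝ) * E m := mul_pos hqmposR (hEpos m)
  have s1a : ε < ε * (((a (m+1):ℝ)+2) * ((q m:ℝ) * E m)) := by nlinarith
  have s1b : ε * (((a (m+1):ℝ)+2) * ((q m:ℝ)*E m)) ≤ (a (L+1):ℝ) * ((q m:ℝ)*E m) := by
    have h := mul_le_mul_of_nonneg_right hA.le hEmkpos.le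
    nlinarith [h]
  have s1c : (a (L+1):ℝ) * ((q m:ℝ)*E m) ≤ (a (L+1):ℝ) * ((k:ℝ)*E m) := by
    refine mul_le_mul_of_nonneg_left ?_ hApos.le
    exact mul_le_mul_of_nonneg_right hqmR (hEpos m).le
  have step1 : ε < (a (L+1):ℝ) * ((k:ℝ) * E m) :=
    lt_of_lt_of_le (lt_of_lt_of_le s1a s1b) s1c
  have step2 : (a (L+1):ℝ) * ((q L:ℝ) * E L) < 1 := by
    have h := mul_le_mul_of_nonneg_right hqL1R (hEpos L).le
    nlinarith [h, hELub]
  have step3 : E m < c * E L := by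
    have h1 : c * |(q L : ℝ) * θ - round ((q L : ℝ) * θ)| ≤ c * E L :=
      mul_le_mul_of_nonneg_left hrnd hc.le
    linarith [hEm_le, hlt]
  have s4 : (a (L+1):ℝ) * ((k:ℝ) * E m) < (a (L+1):ℝ) * ((k:ℝ) * (c * E L)) := by
    refine mul_lt_mul_of_pos_left ?_ hApos
    exact mul_lt_mul_of_pos_left step3 hkpos
  have s4' : (a (L+1):ℝ) * ((k:ℝ) * (c * E L)) = c * ((k:ℝ) * ((a (L+1):ℝ) * E L)) := by
    ring
  have step4 : ε < c * ((k:ℝ) * ((a (L+1):ℝ) * E L)) := by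
    rw [← s4']; exact lt_trans step1 s4
  have hck : (0:ℝ) < c * (k:ℝ) := mul_pos hc hkpos
  have h5a : ε * (q L:ℝ) < (c * ((k:ℝ) * ((a (L+1):ℝ) * E L))) * (q L:ℝ) :=
    mul_lt_mul_of_pos_right step4 hqLpos
  have h5b : (c * ((k:ℝ) * ((a (L+1):ℝ) * E L))) * (q L:ℝ)
      = (c * (k:ℝ)) * ((a (L+1):ℝ) * ((q L:ℝ) * E L)) := by ring
  have h5c : (c * (k:ℝ)) * ((a (L+1):ℝ) * ((q L:ℝ) * E L)) < (c*(k:ℝ)) * 1 :=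
    mul_lt_mul_of_pos_left step2 hck
  have step5 : ε * (q L : ℝ) < c * (k:ℝ) := by
    rw [h5b] at h5a
    linarith
  rw [ge_iff_le, div_mul_eq_mul_div, div_le_iff₀ hc]
  linarith [step5]
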